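/- For every n ≥ 2, if M is a countable subset of L that is dense in L with its Euclidean subspace topology, then the space (X, τ(M)) is neither perfect nor Lindelöf. -/

import Mathlib

open Metric Set TopologicalSpace

noncomputable section

/-- The last coordinate `x (n-1)` of a point of `EuclideanSpace ℝ (Fin n)`
(junk value `0` if `n = 0`). -/
def lastCoord (n : ℕ) (x : EuclideanSpace ℝ (Fin n)) : ℝ :=
  if h : 0 < n then x ⟨n - 1, Nat.sub_lt h one_pos⟩ else 0

/-- The closed upper half-space `X = {x : x (n-1) ≥ 0}`. -/
def HalfSpace (n : ℕ) : Set (EuclideanSpace ℝ (Fin n)) := {x | 0 ≤ lastCoord n x}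

/-- The open upper half-space `P = {x : x (n-1) > 0}`. -/
def OpenHalf (n : ℕ) : Set (EuclideanSpace ℝ (Fin n)) := {x | 0 < lastCoord n x}

/-- The boundary hyperplane `L = {x : x (n-1) = 0}`. -/
def Bdry (n : ℕ) : Set (EuclideanSpace ℝ (Fin n)) := {x | lastCoord n x = 0}

/-- The `n`-th standard basis vector `e` (junk value `0` if `n = 0`). -/
def eVec (n : ℕ) : EuclideanSpace ℝ (Fin n) :=
  if h : 0 < n then EuclideanSpace.single ⟨n - 1, Nat.sub_lt h one_pos⟩ (1 : ℝ) else 0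

/-- The tangent ball `B̃(a, ε) = {a} ∪ B(a + ε • e, ε)`. -/
def tangentBall (n : ℕ) (a : EuclideanSpace ℝ (Fin n)) (ε : ℝ) :
    Set (EuclideanSpace ℝ (Fin n)) :=
  {a} ∪ ball (a + ε • eVec n) ε

/-- The generating family for the topology `τ(A)` on `X`:
balls `B(a,ε)` with `a ∈ P`, `0 < ε < a (n-1)`; traces `B(a,ε) ∩ X` with `a ∈ A`, `ε > 0`;
and tangent balls `B̃(a,ε)` with `a ∈ L \ A`, `ε > 0`. -/
def niemGen (n : ℕ) (A : Set (EuclideanSpace ℝ (Fin n))) : Set (Set (HalfSpace n)) :=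
  {s | ∃ a ∈ OpenHalf n, ∃ ε, 0 < ε ∧ ε < lastCoord n a ∧
      s = Subtype.val ⁻¹' ball a ε} ∪
  {s | ∃ a ∈ A, ∃ ε, 0 < ε ∧ s = Subtype.val ⁻¹' ball a ε} ∪
  {s | ∃ a ∈ Bdry n \ A, ∃ ε, 0 < ε ∧ s = Subtype.val ⁻¹' tangentBall n a ε}

/-- The topology `τ(A)` on `X`; `τ(∅)` is the Niemytzki topology `τ_N`. -/
def tau (n : ℕ) (A : Set (EuclideanSpace ℝ (Fin n))) : TopologicalSpace (HalfSpace n) :=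
  generateFrom (niemGen n A)

/-- The inclusion of `L` into `X`. -/
def inclLX (n : ℕ) (x : Bdry n) : HalfSpace n := ⟨x.1, le_of_eq x.2.symm⟩

/-- The subspace topology `τ(A)|_L` on `L` induced from `(X, τ(A))`. -/
def tauL (n : ℕ) (A : Set (EuclideanSpace ℝ (Fin n))) : TopologicalSpace (Bdry n) :=
  TopologicalSpace.induced (inclLX n) (tau n A)

/-- A space is perfect if every closed set is a `Gδ`-set. -/
def IsPerfectSpace (X : Type*) [TopologicalSpace X] : Prop :=
  ∀ s : Set X, IsClosed s → IsGδ s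

/-- An `Fσ`-set: a countable union of closed sets. -/
def IsFsigma {X : Type*} [TopologicalSpace X] (s : Set X) : Prop :=
  ∃ F : ℕ → Set X, (∀ i, IsClosed (F i)) ∧ s = ⋃ i, F i

/-- Countably paracompact: every countable open cover admits a locally finite open refinement. -/
def CountablyParacompact (X : Type*) [TopologicalSpace X] : Prop :=
  ∀ u : ℕ → Set X, (∀ i, IsOpen (u i)) → (⋃ i, u i) = Set.univ →
    ∃ (ι : Type) (v : ι → Set X), (∀ j, IsOpen (v j)) ∧ (⋃ j, v j) = Set.univ ∧
      LocallyFinite v ∧ ∀ j, ∃ i, v j ⊆ u i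

/-- A zero set: the zero locus of a continuous real-valued function. -/
def IsZeroSet {X : Type*} [TopologicalSpace X] (s : Set X) : Prop :=
  ∃ f : X → ℝ, Continuous f ∧ s = f ⁻¹' {0}

/-- `Y` is z-embedded in `X` if every zero set of the subspace `Y`
is the trace on `Y` of a zero set of `X`. -/
def ZEmbedded {X : Type*} [TopologicalSpace X] (Y : Set X) : Prop :=
  ∀ s : Set Y, IsZeroSet s → ∃ Z : Set X, IsZeroSet Z ∧ s = Subtype.val ⁻¹' Z

/-- `Y` is `C*`-embedded in `X` if every bounded continuous real-valued function on the
subspace `Y` extends to a bounded continuous function on `X`. -/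
def CStarEmbedded {X : Type*} [TopologicalSpace X] (Y : Set X) : Prop :=
  ∀ f : Y → ℝ, Continuous f → (∃ M, ∀ y, |f y| ≤ M) →
    ∃ g : X → ℝ, Continuous g ∧ (∃ M, ∀ x, |g x| ≤ M) ∧ ∀ y : Y, g ↑y = f y
end
section NiemHelpers

open Metric Set TopologicalSpace

variable {n : ℕ}

lemma coord_abs_le_dist (x y : EuclideanSpace ℝ (Fin n)) (k : Fin n) :
    |x k - y k| ≤ dist x y := by
  rw [EuclideanSpace.dist_eq, ← Real.sqrt_sq_eq_abs]
  apply Real.sqrt_le_sqrt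
  have h := Finset.single_le_sum (f := fun i => dist (x i) (y i) ^ 2)
    (fun i _ => sq_nonneg _) (Finset.mem_univ k)
  simpa [Real.dist_eq] using h

lemma lastCoord_eq (h : 0 < n) (x : EuclideanSpace ℝ (Fin n)) :
    lastCoord n x = x ⟨n - 1, Nat.sub_lt h one_pos⟩ := dif_pos h

lemma lastCoord_abs_le_dist (h : 0 < n) (x y : EuclideanSpace ℝ (Fin n)) :
    |lastCoord n x - lastCoord n y| ≤ dist x y := by
  rw [lastCoord_eq h, lastCoord_eq h]; exact coord_abs_le_dist x y _

lemma lastCoord_add (h : 0 < n) (x y : EuclideanSpace ℝ (Fin n)) :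
    lastCoord n (x + y) = lastCoord n x + lastCoord n y := by
  rw [lastCoord_eq h, lastCoord_eq h, lastCoord_eq h]; rfl

lemma lastCoord_smul (h : 0 < n) (c : ℝ) (x : EuclideanSpace ℝ (Fin n)) :
    lastCoord n (c • x) = c * lastCoord n x := by
  rw [lastCoord_eq h, lastCoord_eq h]; rfl

lemma lastCoord_eVec (h : 0 < n) : lastCoord n (eVec n) = 1 := by
  rw [lastCoord_eq h, eVec, dif_pos h, EuclideanSpace.single_apply, if_pos rfl]

lemma mem_ball_lastCoord (h : 0 < n) {a y : EuclideanSpace ℝ (Fin n)} {ε : ℝ}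
    (hy : y ∈ ball a ε) : lastCoord n a - ε < lastCoord n y := by
  have h1 := lastCoord_abs_le_dist h y a
  have h2 : dist y a < ε := mem_ball.mp hy
  have := abs_lt.mp (lt_of_le_of_lt h1 h2)
  linarith [this.1, this.2]

lemma pos_of_mem_tangent (h : 0 < n) {a y : EuclideanSpace ℝ (Fin n)} {ε : ℝ}
    (ha : lastCoord n a = 0) (hy : y ∈ ball (a + ε • eVec n) ε) :
    0 < lastCoord n y := by
  have h1 : lastCoord n (a + ε • eVec n) = ε := by
    rw [lastCoord_add h, lastCoord_smul h, lastCoord_eVec h, ha]; ring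
  have := mem_ball_lastCoord h hy
  rw [h1] at this; linarith

lemma generateOpen_of_nbhds {α : Type*} {g : Set (Set α)} {U : Set α}
    (h : ∀ x ∈ U, ∃ s ∈ g, x ∈ s ∧ s ⊆ U) : TopologicalSpace.GenerateOpen g U := by
  have hU : U = ⋃₀ {s | s ∈ g ∧ s ⊆ U} := by
    apply Set.Subset.antisymm
    · intro x hx
      obtain ⟨s, hs, hxs, hsU⟩ := h x hx
      exact ⟨s, ⟨hs, hsU⟩, hxs⟩
    · exact Set.sUnion_subset fun s hs => hs.2
  rw [hU]
  exact TopologicalSpace.GenerateOpen.sUnion _ fun s hs => .basic _ hs.1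


lemma nbhd_of_mem_M (hn : 0 < n) {M : Set (EuclideanSpace ℝ (Fin n))} (hM : M ⊆ Bdry n)
    {U : Set (HalfSpace n)} (hU : TopologicalSpace.GenerateOpen (niemGen n M) U) :
    ∀ x : HalfSpace n, x ∈ U → x.1 ∈ M →
      ∃ δ > 0, (Subtype.val ⁻¹' ball x.1 δ : Set (HalfSpace n)) ⊆ U := by
  induction hU with
  | basic s hs =>
    intro x hx hxM
    have hx0 : lastCoord n x.1 = 0 := hM hxM
    rcases hs with (⟨a, ha, ε, hε0, hεa, rfl⟩ | ⟨a, _, ε, hε0, rfl⟩) | ⟨a, ha, ε, hε0, rfl⟩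
    · exfalso
      have hx' : x.1 ∈ ball a ε := hx
      have := mem_ball_lastCoord hn hx'
      rw [hx0] at this; linarith
    · have hd : dist x.1 a < ε := mem_ball.mp (hx : x.1 ∈ ball a ε)
      refine ⟨ε - dist x.1 a, by linarith, ?_⟩
      intro y hy
      have h1 : dist y.1 x.1 < ε - dist x.1 a := mem_ball.mp (hy : y.1 ∈ ball x.1 _)
      have h2 := dist_triangle y.1 x.1 a
      show y.1 ∈ ball a ε
      exact mem_ball.mpr (by linarith)
    · exfalso
      have hx' : x.1 ∈ tangentBall n a ε := hx
      rcases hx' with h | h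
      · exact ha.2 ((Set.mem_singleton_iff.mp h) ▸ hxM)
      · have := pos_of_mem_tangent hn ha.1 h
        rw [hx0] at this; exact lt_irrefl _ this
  | univ => exact fun x _ _ => ⟨1, one_pos, Set.subset_univ _⟩
  | inter s t _ _ ihs iht =>
    intro x hx hxM
    obtain ⟨δ1, hδ1, h1⟩ := ihs x hx.1 hxM
    obtain ⟨δ2, hδ2, h2⟩ := iht x hx.2 hxM
    refine ⟨min δ1 δ2, lt_min hδ1 hδ2, fun y hy => ?_⟩
    have hy' : y.1 ∈ ball x.1 (min δ1 δ2) := hy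
    exact ⟨h1 (ball_subset_ball (min_le_left _ _) hy'),
      h2 (ball_subset_ball (min_le_right _ _) hy')⟩
  | sUnion S _ ih =>
    intro x hx hxM
    obtain ⟨s, hsS, hxs⟩ := hx
    obtain ⟨δ, hδ, hsub⟩ := ih s hsS x hxs hxM
    exact ⟨δ, hδ, hsub.trans (Set.subset_sUnion_of_mem hsS)⟩

lemma isOpen_compl_M (hn : 0 < n) {M : Set (EuclideanSpace ℝ (Fin n))} (hM : M ⊆ Bdry n) :
    TopologicalSpace.GenerateOpen (niemGen n M)
      ((Subtype.val ⁻¹' M : Set (HalfSpace n))ᶜ) := by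
  apply generateOpen_of_nbhds
  intro x hx
  have hxX : 0 ≤ lastCoord n x.1 := x.2
  rcases lt_or_eq_of_le hxX with hpos | hzero
  · refine ⟨Subtype.val ⁻¹' ball x.1 (lastCoord n x.1 / 2),
      Or.inl (Or.inl ⟨x.1, hpos, lastCoord n x.1 / 2, by linarith, by linarith, rfl⟩),
      ?_, ?_⟩
    · show x.1 ∈ ball x.1 _
      exact mem_ball_self (by linarith)
    · intro y hy hyM
      have hy' : y.1 ∈ ball x.1 (lastCoord n x.1 / 2) := hy
      have h1 := mem_ball_lastCoord hn hy'
      have h2 : lastCoord n y.1 = 0 := hM hyM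
      linarith
  · refine ⟨Subtype.val ⁻¹' tangentBall n x.1 1,
      Or.inr ⟨x.1, ⟨hzero.symm, hx⟩, 1, one_pos, rfl⟩, Or.inl rfl, ?_⟩
    intro y hy hyM
    have hy' : y.1 ∈ tangentBall n x.1 1 := hy
    rcases hy' with h | h
    · refine hx ?_
      show x.1 ∈ M
      rw [← Set.mem_singleton_iff.mp h]
      exact hyM
    · have := pos_of_mem_tangent hn hzero.symm h
      rw [hM hyM] at this; exact lt_irrefl _ this

lemma dense_compl_singleton_bdry (hn : 2 ≤ n) (z : Bdry n) :
    Dense ({z}ᶜ : Set (Bdry n)) := by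
  have hn0 : 0 < n := by omega
  rw [Metric.dense_iff]
  intro x r hr
  set j0 : Fin n := ⟨0, by omega⟩ with hj0
  have hj0ne : (⟨n - 1, Nat.sub_lt hn0 one_pos⟩ : Fin n) ≠ j0 := by
    simp only [hj0, Ne, Fin.mk.injEq]
    omega
  have hmem : ∀ t : ℝ, x.1 + t • EuclideanSpace.single j0 (1:ℝ) ∈ Bdry n := by
    intro t
    show lastCoord n _ = 0
    rw [lastCoord_add hn0, lastCoord_smul hn0]
    have h2 : lastCoord n (EuclideanSpace.single j0 (1:ℝ)) = 0 := by
      rw [lastCoord_eq hn0, EuclideanSpace.single_apply, if_neg hj0ne]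
    rw [h2, (x.2 : lastCoord n x.1 = 0)]
    ring
  have hdist : ∀ t : ℝ, 0 ≤ t →
      dist (x.1 + t • EuclideanSpace.single j0 (1:ℝ)) x.1 = t := by
    intro t ht
    rw [dist_eq_norm]
    simp only [add_sub_cancel_left]
    rw [norm_smul, EuclideanSpace.norm_single]
    simp [abs_of_nonneg ht]
  set z1 : Bdry n := ⟨_, hmem (r/2)⟩
  set z2 : Bdry n := ⟨_, hmem (r/4)⟩
  have hz12 : z1 ≠ z2 := by
    intro h
    have := congrArg (fun w : Bdry n => w.1 j0) h
    simp only [z1, z2] at this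
    have h1 : x.1 j0 + (r/2) * 1 = x.1 j0 + (r/4) * 1 := by
      simpa [EuclideanSpace.single_apply] using this
    have : r / 2 = r / 4 := by linarith
    linarith
  have hball : ∀ t : ℝ, 0 < t → t < r → (⟨_, hmem t⟩ : Bdry n) ∈ Metric.ball x r := by
    intro t ht htr
    rw [Metric.mem_ball, Subtype.dist_eq]
    rw [hdist t ht.le]
    exact htr
  by_cases h1 : z1 = z
  · refine ⟨z2, ?_, ?_⟩
    · exact hball (r/4) (by linarith) (by linarith)
    · simp only [Set.mem_compl_iff, Set.mem_singleton_iff]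
      rw [← h1]
      exact fun h => hz12 h.symm
  · exact ⟨z1, hball (r/2) (by linarith) (by linarith), h1⟩

set_option maxHeartbeats 1000000 in
lemma not_perfect_aux (n : ℕ) (hn : 2 ≤ n) (M : Set (EuclideanSpace ℝ (Fin n)))
    (hM : M ⊆ Bdry n) (hMc : M.Countable)
    (hMd : Dense (Subtype.val ⁻¹' M : Set (Bdry n))) :
    ¬ @IsPerfectSpace (HalfSpace n) (tau n M) := by
  intro hp
  have hn0 : 0 < n := by omega
  -- Bdry n is a complete (hence Baire) space
  have hBc : IsClosed (Bdry n) := by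
    have heq : Bdry n = (fun x : EuclideanSpace ℝ (Fin n) =>
        x ⟨n - 1, Nat.sub_lt hn0 one_pos⟩) ⁻¹' {0} := by
      ext x
      simp only [Set.mem_preimage, Set.mem_singleton_iff]
      rw [show (x ∈ Bdry n) = (lastCoord n x = 0) from rfl, lastCoord_eq hn0]
    rw [heq]
    exact isClosed_singleton.preimage (EuclideanSpace.proj _).continuous
  haveI : CompleteSpace (Bdry n) := hBc.completeSpace_coe
  -- M is closed in (X, tau M)
  have hclosed : @IsClosed _ (tau n M) (Subtype.val ⁻¹' M : Set (HalfSpace n)) :=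
    @IsClosed.mk _ (tau n M) _ (isOpen_compl_M hn0 hM)
  obtain ⟨T, hTopen, hTc, hTeq⟩ := hp _ hclosed
  have key : ∀ U ∈ T, ∀ m ∈ M, ∃ δ > 0,
      (Subtype.val ⁻¹' Metric.ball m δ : Set (HalfSpace n)) ⊆ U := by
    intro U hU m hm
    have hmX : (0:ℝ) ≤ lastCoord n m := le_of_eq (hM hm).symm
    have hmU : (⟨m, hmX⟩ : HalfSpace n) ∈ U := by
      have h1 : (⟨m, hmX⟩ : HalfSpace n) ∈ (Subtype.val ⁻¹' M : Set (HalfSpace n)) := hm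
      rw [hTeq] at h1
      exact Set.mem_sInter.mp h1 U hU
    have hgo : TopologicalSpace.GenerateOpen (niemGen n M) U := hTopen U hU
    exact nbhd_of_mem_M hn0 hM hgo ⟨m, hmX⟩ hmU hm
  choose! δ hδpos hδsub using key
  have hGδ : IsGδ (Subtype.val ⁻¹' M : Set (Bdry n)) := by
    refine ⟨(fun U => (Subtype.val ⁻¹' (⋃ m ∈ M, Metric.ball m (δ U m)) : Set (Bdry n))) '' T,
      ?_, hTc.image _, ?_⟩
    · rintro t ⟨U, hU, rfl⟩
      exact (isOpen_biUnion fun m _ => Metric.isOpen_ball).preimage continuous_subtype_val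
    · apply Set.Subset.antisymm
      · intro x hx
        rintro t ⟨U, hU, rfl⟩
        show x.1 ∈ ⋃ m ∈ M, Metric.ball m (δ U m)
        exact Set.mem_biUnion hx (Metric.mem_ball_self (hδpos U hU x.1 hx))
      · intro x hx
        have hxX : (0:ℝ) ≤ lastCoord n x.1 := le_of_eq (x.2 : lastCoord n x.1 = 0).symm
        have hmem : (⟨x.1, hxX⟩ : HalfSpace n) ∈ ⋂₀ T := by
          rw [Set.mem_sInter]
          intro U hU
        
          have hxG : x.1 ∈ ⋃ m ∈ M, Metric.ball m (δ U m) := hx _ ⟨U, hU, rfl⟩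
          obtain ⟨m, hm, hxm⟩ := Set.mem_iUnion₂.mp hxG
          exact hδsub U hU m hm hxm
        rw [← hTeq] at hmem
        exact (hmem : (⟨x.1, hxX⟩ : HalfSpace n).1 ∈ M)
  have hMB : (Subtype.val ⁻¹' M : Set (Bdry n)).Countable :=
    hMc.preimage Subtype.val_injective
  have hres1 : (Subtype.val ⁻¹' M : Set (Bdry n)) ∈ residual (Bdry n) :=
    residual_of_dense_Gδ hGδ hMd
  have hres2 : (Subtype.val ⁻¹' M : Set (Bdry n))ᶜ ∈ residual (Bdry n) := by
    have heq : (Subtype.val ⁻¹' M : Set (Bdry n))ᶜ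
        = ⋂ z ∈ (Subtype.val ⁻¹' M : Set (Bdry n)), ({z}ᶜ : Set (Bdry n)) := by
      ext w
      simp only [Set.mem_compl_iff, Set.mem_iInter, Set.mem_singleton_iff]
      constructor
      · intro hw z hz hwz
        exact hw (hwz ▸ hz)
      · intro hw hwM
        exact hw w hwM rfl
    rw [heq]
    exact (countable_bInter_mem hMB).2 fun z _ =>
      residual_of_dense_open isClosed_singleton.isOpen_compl
        (dense_compl_singleton_bdry hn z)
  have hempty : (∅ : Set (Bdry n)) ∈ residual (Bdry n) := by
    have h := Filter.inter_mem hres1 hres2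
    simpa using h
  have hdense := dense_of_mem_residual hempty
  have hne : Nonempty (Bdry n) := by
    refine ⟨⟨0, ?_⟩⟩
    show lastCoord n 0 = 0
    rw [lastCoord_eq hn0]
    rfl
  exact Set.not_nonempty_empty hdense.nonempty

set_option maxHeartbeats 1000000 in
lemma not_lindelof_aux (n : ℕ) (hn : 2 ≤ n) (M : Set (EuclideanSpace ℝ (Fin n)))
    (hM : M ⊆ Bdry n) (hMc : M.Countable) :
    ¬ @LindelofSpace (HalfSpace n) (tau n M) := by
  intro hl
  classical
  letI := tau n M
  haveI := hl
  have hn0 : 0 < n := by omega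
  obtain ⟨f, hf⟩ : ∃ f : ℕ → EuclideanSpace ℝ (Fin n), M ⊆ Set.range f := by
    rcases M.eq_empty_or_nonempty with h | h
    · exact ⟨fun _ => 0, by simp [h]⟩
    · obtain ⟨f, hfe⟩ := hMc.exists_eq_range h
      exact ⟨f, hfe.le⟩
  set rk : ℕ → ℝ := fun k => (1/2 : ℝ) ^ (k + 2) with hrk
  have hrkpos : ∀ k, 0 < rk k := fun k => by positivity
  set U : ℕ ⊕ HalfSpace n → Set (HalfSpace n) := fun idx =>
    match idx with
    | Sum.inl k => if f k ∈ M then (Subtype.val ⁻¹' Metric.ball (f k) (rk k)) else ∅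
    | Sum.inr x =>
        if 0 < lastCoord n x.1 then Subtype.val ⁻¹' Metric.ball x.1 (lastCoord n x.1 / 2)
        else if x.1 ∈ M then ∅ else Subtype.val ⁻¹' tangentBall n x.1 1
    with hUdef
  have hUopen : ∀ idx, @IsOpen _ (tau n M) (U idx) := by
    intro idx
    match idx with
    | Sum.inl k =>
      by_cases h : f k ∈ M
      · have : TopologicalSpace.GenerateOpen (niemGen n M)
            (Subtype.val ⁻¹' Metric.ball (f k) (rk k)) :=
          .basic _ (Or.inl (Or.inr ⟨f k, h, rk k, hrkpos k, rfl⟩))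
        simpa [hUdef, h] using (show @IsOpen _ (tau n M) _ from this)
      · simp only [hUdef, h, if_false]
        exact @isOpen_empty _ (tau n M)
    | Sum.inr x =>
      by_cases h1 : 0 < lastCoord n x.1
      · have : TopologicalSpace.GenerateOpen (niemGen n M)
            (Subtype.val ⁻¹' Metric.ball x.1 (lastCoord n x.1 / 2)) :=
          .basic _ (Or.inl (Or.inl ⟨x.1, h1, lastCoord n x.1 / 2, by linarith, by linarith, rfl⟩))
        simpa [hUdef, h1] using (show @IsOpen _ (tau n M) _ from this)
      · have hx0 : lastCoord n x.1 = 0 := le_antisymm (not_lt.mp h1) x.2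
        by_cases h2 : x.1 ∈ M
        · simp only [hUdef, h1, if_false, h2, if_true]
          exact @isOpen_empty _ (tau n M)
        · have : TopologicalSpace.GenerateOpen (niemGen n M)
              (Subtype.val ⁻¹' tangentBall n x.1 1) :=
            .basic _ (Or.inr ⟨x.1, ⟨hx0, h2⟩, 1, one_pos, rfl⟩)
          simpa [hUdef, h1, h2] using (show @IsOpen _ (tau n M) _ from this)
  have hUcover : (Set.univ : Set (HalfSpace n)) ⊆ ⋃ idx, U idx := by
    intro x _
    by_cases h1 : 0 < lastCoord n x.1
    · refine Set.mem_iUnion.mpr ⟨Sum.inr x, ?_⟩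
      simp only [hUdef, h1, if_true]
      show x.1 ∈ Metric.ball x.1 _
      exact Metric.mem_ball_self (by linarith)
    · by_cases h2 : x.1 ∈ M
      · obtain ⟨k, hk⟩ := hf h2
        have h2' : f k ∈ M := by rw [hk]; exact h2
        refine Set.mem_iUnion.mpr ⟨Sum.inl k, ?_⟩
        simp only [hUdef, h2', if_true]
        show x.1 ∈ Metric.ball (f k) (rk k)
        rw [hk]
        exact Metric.mem_ball_self (hrkpos k)
      · refine Set.mem_iUnion.mpr ⟨Sum.inr x, ?_⟩
        simp only [hUdef, h1, if_false, h2]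
        show x.1 ∈ tangentBall n x.1 1
        exact Or.inl rfl
  obtain ⟨t, htc, hcov⟩ := isLindelof_univ.elim_countable_subcover U hUopen hUcover
  set j0 : Fin n := ⟨0, by omega⟩ with hj0
  have hj0ne : (⟨n - 1, Nat.sub_lt hn0 one_pos⟩ : Fin n) ≠ j0 := by
    simp only [hj0, Ne, Fin.mk.injEq]; omega
  have hpmem : ∀ r : ℝ, EuclideanSpace.single j0 r ∈ HalfSpace n := by
    intro r
    show 0 ≤ lastCoord n _
    rw [lastCoord_eq hn0, EuclideanSpace.single_apply, if_neg hj0ne]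
  set p : ℝ → HalfSpace n := fun r => ⟨EuclideanSpace.single j0 r, hpmem r⟩ with hp
  have hplast : ∀ r, lastCoord n (p r).1 = 0 := by
    intro r
    rw [lastCoord_eq hn0]
    show EuclideanSpace.single j0 r _ = 0
    rw [EuclideanSpace.single_apply, if_neg hj0ne]
  have hpj0 : ∀ r, (p r).1 j0 = r := by
    intro r
    show EuclideanSpace.single j0 r j0 = r
    rw [EuclideanSpace.single_apply, if_pos rfl]
  set S : Set ℝ := (fun x : HalfSpace n => x.1 j0) '' (Sum.inr ⁻¹' t) with hS
  have hSc : S.Countable := (htc.preimage Sum.inr_injective).image _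
  have hsub : Set.Icc (0:ℝ) 3 ⊆ S ∪ ⋃ k, Set.Ioo (f k j0 - rk k) (f k j0 + rk k) := by
    intro r _
    have hpr : p r ∈ ⋃ idx ∈ t, U idx := hcov (Set.mem_univ _)
    obtain ⟨idx, hidx, hmem⟩ := Set.mem_iUnion₂.mp hpr
    match idx with
    | Sum.inl k =>
      by_cases hfk : f k ∈ M
      · simp only [hUdef, hfk, if_true] at hmem
        have hd : dist (p r).1 (f k) < rk k := hmem
        have habs := coord_abs_le_dist (p r).1 (f k) j0
        rw [hpj0] at habs
        have := abs_lt.mp (lt_of_le_of_lt habs hd)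
        refine Or.inr (Set.mem_iUnion.mpr ⟨k, ?_⟩)
        constructor <;> linarith [this.1, this.2]
      · simp only [hUdef, hfk, if_false] at hmem
        exact absurd hmem (Set.notMem_empty _)
    | Sum.inr x =>
      by_cases h1 : 0 < lastCoord n x.1
      · exfalso
        simp only [hUdef, h1, if_true] at hmem
        have hd : dist (p r).1 x.1 < lastCoord n x.1 / 2 := hmem
        have habs := lastCoord_abs_le_dist hn0 (p r).1 x.1
        rw [hplast] at habs
        have := abs_lt.mp (lt_of_le_of_lt habs hd)
        have h2 := this.1
        simp only [zero_sub, neg_lt] at h2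
        linarith
      · have hx0 : lastCoord n x.1 = 0 := le_antisymm (not_lt.mp h1) x.2
        by_cases h2 : x.1 ∈ M
        · simp only [hUdef, h1, if_false, h2, if_true] at hmem
          exact absurd hmem (Set.notMem_empty _)
        · simp only [hUdef, h1, if_false, h2] at hmem
          have hmem' : (p r).1 ∈ tangentBall n x.1 1 := hmem
          rcases hmem' with h | h
          · refine Or.inl ⟨x, hidx, ?_⟩
            show x.1 j0 = r
            have hxx : (p r).1 = x.1 := Set.mem_singleton_iff.mp h
            rw [← hxx, hpj0]
          · exfalso
            have := pos_of_mem_tangent hn0 hx0 h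
            rw [hplast] at this
            exact lt_irrefl _ this
  -- measure contradiction
  have hμS : MeasureTheory.volume S = 0 := hSc.measure_zero _
  have hioo : ∀ k, MeasureTheory.volume (Set.Ioo (f k j0 - rk k) (f k j0 + rk k))
      = ENNReal.ofReal ((1/2 : ℝ) ^ (k + 1)) := by
    intro k
    rw [Real.volume_Ioo]
    congr 1
    have : f k j0 + rk k - (f k j0 - rk k) = 2 * rk k := by ring
    rw [this, hrk]
    ring
  have htsum : (∑' k, MeasureTheory.volume (Set.Ioo (f k j0 - rk k) (f k j0 + rk k)))
      = 1 := by
    simp only [hioo]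
    have hofr : ∀ k : ℕ, ENNReal.ofReal ((1/2 : ℝ) ^ (k + 1)) = (2⁻¹ : ENNReal) ^ (k + 1) := by
      intro k
      rw [ENNReal.ofReal_pow (by norm_num)]
      congr 1
      rw [one_div, ENNReal.ofReal_inv_of_pos (by norm_num)]
      norm_num
    simp only [hofr]
    rw [show (fun k : ℕ => (2⁻¹ : ENNReal) ^ (k + 1)) = fun k : ℕ => 2⁻¹ * 2⁻¹ ^ k from
      funext fun k => by rw [pow_succ, mul_comm]]
    rw [ENNReal.tsum_mul_left, ENNReal.tsum_geometric, ENNReal.one_sub_inv_two, inv_inv]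
    exact ENNReal.inv_mul_cancel (by norm_num) (by norm_num)
  have hcalc : MeasureTheory.volume (Set.Icc (0:ℝ) 3)
      ≤ MeasureTheory.volume S
        + ∑' k, MeasureTheory.volume (Set.Ioo (f k j0 - rk k) (f k j0 + rk k)) :=
    le_trans (MeasureTheory.measure_mono hsub)
      (le_trans (MeasureTheory.measure_union_le _ _)
        (add_le_add le_rfl (MeasureTheory.measure_iUnion_le _)))
  rw [Real.volume_Icc, hμS, zero_add, htsum] at hcalc
  have h3 : ENNReal.ofReal (3 - 0 : ℝ) = 3 := by norm_num
  rw [h3] at hcalc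
  exact absurd hcalc (by norm_num)

end NiemHelpers

/-- For every `n ≥ 2`, if `M` is a countable subset of `L` dense in the Euclidean topology of
`L`, then `(X, τ(M))` is neither perfect nor Lindelöf. -/
theorem tauM_not_perfect_not_lindelof (n : ℕ) (hn : 2 ≤ n)
    (M : Set (EuclideanSpace ℝ (Fin n))) (hM : M ⊆ Bdry n) (hMc : M.Countable)
    (hMd : Dense (Subtype.val ⁻¹' M : Set (Bdry n))) :
    ¬ @IsPerfectSpace (HalfSpace n) (tau n M) ∧ ¬ @LindelofSpace (HalfSpace n) (tau n M) :=
  ⟨not_perfect_aux n hn M hM hMc hMd, not_lindelof_aux n hn M hM hMc⟩
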